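/- Let α > 0, λ ∈ [0,1], and μ ∈ [0,1] be reals with 1 - (1-λ)α^λ ≤ μ ≤ λα^(λ-1). Then for any reals x, y: ((1-μ)x + μy)² / α^(2λ) ≤ (1-λ)x² + λ y²/α². Equality holds if and only if λ ∈ {0,1}, or α = 1 and x = y, or x = y = 0. -/

import Mathlib

set_option maxHeartbeats 1600000

private lemma amgm_u (u l : ℝ) (hu : 0 < u) (hu1 : u ≠ 1) (hl0 : 0 < l) (hl1 : l < 1) :
    u ^ l < l * u + (1 - l) := by
  have hne : Real.log u ≠ (0:ℝ) := Real.log_ne_zero_of_pos_of_ne_one hu hu1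
  have h := strictConvexOn_exp.2 (Set.mem_univ (Real.log u)) (Set.mem_univ 0)
    hne hl0 (show (0:ℝ) < 1 - l by linarith) (by ring)
  rw [Real.rpow_def_of_pos hu]
  simp only [smul_eq_mul, mul_zero, add_zero, Real.exp_zero, mul_one, Real.exp_log hu] at h
  rw [mul_comm]; exact h

private lemma amgm_strict (a l : ℝ) (ha : 0 < a) (ha1 : a ≠ 1) (hl0 : 0 < l) (hl1 : l < 1) :
    1 < (1 - l) * a ^ l + l * a ^ (l - 1) := by
  have hu : (0:ℝ) < a⁻¹ := by positivity
  have hu1 : a⁻¹ ≠ 1 := by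
    simp only [ne_eq, inv_eq_one]; exact ha1
  have h := amgm_u a⁻¹ l hu hu1 hl0 hl1
  have hal : (0:ℝ) < a ^ l := Real.rpow_pos_of_pos ha l
  have key : a ^ l * (a⁻¹) ^ l = 1 := by
    rw [← Real.mul_rpow ha.le hu.le, mul_inv_cancel₀ ha.ne', Real.one_rpow]
  have h2 := mul_lt_mul_of_pos_left h hal
  rw [key] at h2
  have hsub : a ^ (l - 1) = a ^ l / a := by
    rw [Real.rpow_sub ha, Real.rpow_one]
  rw [hsub]
  have hinv : a ^ l * (l * a⁻¹ + (1 - l)) = (1 - l) * a ^ l + l * (a ^ l / a) := by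
    field_simp; ring
  linarith [hinv ▸ h2]

private lemma quad_le {c l e1 e2 m K : ℝ} (hc : 0 ≤ c) (h1 : e1 ≤ m) (h2 : m ≤ e2)
    (hK1 : c * e1 ^ 2 - 2 * l * e1 ≤ K) (hK2 : c * e2 ^ 2 - 2 * l * e2 ≤ K) :
    c * m ^ 2 - 2 * l * m ≤ K := by
  rcases le_total (c * (m + e1)) (2 * l) with h | h
  · nlinarith [mul_nonneg (sub_nonneg.2 h1) (sub_nonneg.2 h)]
  · nlinarith [mul_nonneg (sub_nonneg.2 h2)
      (by nlinarith [mul_nonneg hc (sub_nonneg.2 (h1.trans h2))] : (0:ℝ) ≤ c * (m + e2) - 2 * l)]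

private lemma quad_lt {c l e1 e2 m K : ℝ} (hc : 0 ≤ c) (h1 : e1 ≤ m) (h2 : m ≤ e2)
    (hK1 : c * e1 ^ 2 - 2 * l * e1 < K) (hK2 : c * e2 ^ 2 - 2 * l * e2 < K) :
    c * m ^ 2 - 2 * l * m < K := by
  rcases le_total (c * (m + e1)) (2 * l) with h | h
  · nlinarith [mul_nonneg (sub_nonneg.2 h1) (sub_nonneg.2 h)]
  · nlinarith [mul_nonneg (sub_nonneg.2 h2)
      (by nlinarith [mul_nonneg hc (sub_nonneg.2 (h1.trans h2))] : (0:ℝ) ≤ c * (m + e2) - 2 * l)]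

private lemma f_le {a l m A B : ℝ} (ha : 0 < a) (hl0 : 0 < l) (hl1 : l < 1)
    (hm0 : 0 ≤ m) (hmle : m ≤ 1) (hm1 : 1 - (1 - l) * A ≤ m) (hm2 : m ≤ l * B)
    (hA : 0 < A) (hB : 0 < B) (hAB : a * B = A) (hamgm : 1 ≤ (1 - l) * A + l * B) :
    l * (1 - m) ^ 2 + (1 - l) * a ^ 2 * m ^ 2 ≤ l * (1 - l) * A ^ 2 := by
  subst hAB
  have hl1' : (0:ℝ) < 1 - l := by linarith
  have haB : (0:ℝ) < a * B := mul_pos ha hB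
  have hcpos : (0:ℝ) ≤ l + (1 - l) * a ^ 2 := by nlinarith [sq_nonneg a]
  -- endpoint bounds
  have end0 : (1 - (1 - l) * (a * B)) ≤ 0 →
      l + (1 - l) * a ^ 2 * 0 ≤ l * (1 - l) * (a * B) ^ 2 := by
    intro hq2
    have h' : 0 ≤ (1 - l) * (a * B) - 1 := by linarith
    have haB1 : 1 ≤ a * B := by nlinarith [mul_nonneg hl0.le haB.le]
    nlinarith [mul_nonneg (mul_nonneg hl0.le h') haB.le, mul_nonneg hl0.le (sub_nonneg.2 haB1)]
  have endm1 : 0 ≤ (1 - (1 - l) * (a * B)) →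
      l * (1 - (1 - (1 - l) * (a * B))) ^ 2 + (1 - l) * a ^ 2 * (1 - (1 - l) * (a * B)) ^ 2
        ≤ l * (1 - l) * (a * B) ^ 2 := by
    intro hq2
    have key : a * (1 - (1 - l) * (a * B)) ≤ l * (a * B) := by
      nlinarith [mul_le_mul_of_nonneg_left hamgm ha.le]
    have key0 : 0 ≤ a * (1 - (1 - l) * (a * B)) := mul_nonneg ha.le hq2
    have key1 : 0 ≤ l * (a * B) + a * (1 - (1 - l) * (a * B)) := by
      nlinarith [mul_nonneg hl0.le haB.le]
    nlinarith [mul_nonneg hl1'.le (mul_nonneg (sub_nonneg.2 key) key1)]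
  have end1 : 1 ≤ l * B →
      (1 - l) * a ^ 2 ≤ l * (1 - l) * (a * B) ^ 2 := by
    intro hq2
    have hB1 : 1 ≤ B := by nlinarith [mul_nonneg hl1'.le hB.le]
    nlinarith [mul_nonneg (mul_nonneg hl1'.le (sq_nonneg a))
        (mul_nonneg (by linarith : (0:ℝ) ≤ l * B - 1) hB.le),
      mul_nonneg (mul_nonneg hl1'.le (sq_nonneg a)) (by linarith : (0:ℝ) ≤ B - 1)]
  have endm2 : l * B ≤ 1 →
      l * (1 - l * B) ^ 2 + (1 - l) * a ^ 2 * (l * B) ^ 2 ≤ l * (1 - l) * (a * B) ^ 2 := by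
    intro hq2
    have f1 : 0 ≤ (1 - l) * (a * B) - (1 - l * B) := by linarith
    have f2 : 0 ≤ (1 - l) * (a * B) + (1 - l * B) := by
      nlinarith [mul_nonneg hl1'.le haB.le]
    nlinarith [mul_nonneg hl0.le (mul_nonneg f1 f2)]
  rcases le_total (1 - (1 - l) * (a * B)) 0 with hc1 | hc1 <;>
    rcases le_total 1 (l * B) with hc2 | hc2
  · have hq := quad_le (l := l) (e1 := 0) (e2 := 1) (m := m) (K := l * (1 - l) * (a * B) ^ 2 - l)
      hcpos hm0 hmle (by nlinarith [end0 hc1]) (by nlinarith [end1 hc2])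
    nlinarith [hq]
  · have hq := quad_le (l := l) (e1 := 0) (e2 := l * B) (m := m)
      (K := l * (1 - l) * (a * B) ^ 2 - l)
      hcpos hm0 hm2 (by nlinarith [end0 hc1]) (by nlinarith [endm2 hc2])
    nlinarith [hq]
  · have hq := quad_le (l := l) (e1 := 1 - (1 - l) * (a * B)) (e2 := 1) (m := m)
      (K := l * (1 - l) * (a * B) ^ 2 - l)
      hcpos hm1 hmle (by nlinarith [endm1 hc1]) (by nlinarith [end1 hc2])
    nlinarith [hq]
  · have hq := quad_le (l := l) (e1 := 1 - (1 - l) * (a * B)) (e2 := l * B) (m := m)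
      (K := l * (1 - l) * (a * B) ^ 2 - l)
      hcpos hm1 hm2 (by nlinarith [endm1 hc1]) (by nlinarith [endm2 hc2])
    nlinarith [hq]

private lemma f_lt {a l m A B : ℝ} (ha : 0 < a) (hl0 : 0 < l) (hl1 : l < 1)
    (hm0 : 0 ≤ m) (hmle : m ≤ 1) (hm1 : 1 - (1 - l) * A ≤ m) (hm2 : m ≤ l * B)
    (hA : 0 < A) (hB : 0 < B) (hAB : a * B = A) (hamgm : 1 < (1 - l) * A + l * B) :
    l * (1 - m) ^ 2 + (1 - l) * a ^ 2 * m ^ 2 < l * (1 - l) * A ^ 2 := by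
  subst hAB
  have hl1' : (0:ℝ) < 1 - l := by linarith
  have haB : (0:ℝ) < a * B := mul_pos ha hB
  have hcpos : (0:ℝ) ≤ l + (1 - l) * a ^ 2 := by nlinarith [sq_nonneg a]
  have end0 : (1 - (1 - l) * (a * B)) ≤ 0 →
      l + (1 - l) * a ^ 2 * 0 < l * (1 - l) * (a * B) ^ 2 := by
    intro hq2
    have h' : 0 ≤ (1 - l) * (a * B) - 1 := by linarith
    have haB1 : 1 < a * B := by nlinarith [mul_pos hl0 haB]
    nlinarith [mul_nonneg (mul_nonneg hl0.le h') haB.le,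
      mul_pos hl0 (by linarith : (0:ℝ) < a * B - 1)]
  have endm1 : 0 ≤ (1 - (1 - l) * (a * B)) →
      l * (1 - (1 - (1 - l) * (a * B))) ^ 2 + (1 - l) * a ^ 2 * (1 - (1 - l) * (a * B)) ^ 2
        < l * (1 - l) * (a * B) ^ 2 := by
    intro hq2
    have key : a * (1 - (1 - l) * (a * B)) < l * (a * B) := by
      nlinarith [mul_lt_mul_of_pos_left hamgm ha]
    have key0 : 0 ≤ a * (1 - (1 - l) * (a * B)) := mul_nonneg ha.le hq2
    have key1 : 0 < l * (a * B) + a * (1 - (1 - l) * (a * B)) := by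
      nlinarith [mul_pos hl0 haB]
    nlinarith [mul_pos hl1' (mul_pos (sub_pos.2 key) key1)]
  have end1 : 1 ≤ l * B →
      (1 - l) * a ^ 2 < l * (1 - l) * (a * B) ^ 2 := by
    intro hq2
    have hB1 : 1 < B := by nlinarith [mul_nonneg hl1'.le hB.le, mul_pos hl1' hB]
    nlinarith [mul_nonneg (mul_nonneg hl1'.le (sq_nonneg a))
        (mul_nonneg (by linarith : (0:ℝ) ≤ l * B - 1) hB.le),
      mul_pos (mul_pos hl1' (mul_pos ha ha)) (by linarith : (0:ℝ) < B - 1)]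
  have endm2 : l * B ≤ 1 →
      l * (1 - l * B) ^ 2 + (1 - l) * a ^ 2 * (l * B) ^ 2 < l * (1 - l) * (a * B) ^ 2 := by
    intro hq2
    have f1 : 0 < (1 - l) * (a * B) - (1 - l * B) := by linarith
    have f2 : 0 < (1 - l) * (a * B) + (1 - l * B) := by
      nlinarith [mul_pos hl1' haB]
    nlinarith [mul_pos hl0 (mul_pos f1 f2)]
  rcases le_total (1 - (1 - l) * (a * B)) 0 with hc1 | hc1 <;>
    rcases le_total 1 (l * B) with hc2 | hc2
  · have hq := quad_lt (l := l) (e1 := 0) (e2 := 1) (m := m) (K := l * (1 - l) * (a * B) ^ 2 - l)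
      hcpos hm0 hmle (by nlinarith [end0 hc1]) (by nlinarith [end1 hc2])
    nlinarith [hq]
  · have hq := quad_lt (l := l) (e1 := 0) (e2 := l * B) (m := m)
      (K := l * (1 - l) * (a * B) ^ 2 - l)
      hcpos hm0 hm2 (by nlinarith [end0 hc1]) (by nlinarith [endm2 hc2])
    nlinarith [hq]
  · have hq := quad_lt (l := l) (e1 := 1 - (1 - l) * (a * B)) (e2 := 1) (m := m)
      (K := l * (1 - l) * (a * B) ^ 2 - l)
      hcpos hm1 hmle (by nlinarith [endm1 hc1]) (by nlinarith [end1 hc2])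
    nlinarith [hq]
  · have hq := quad_lt (l := l) (e1 := 1 - (1 - l) * (a * B)) (e2 := l * B) (m := m)
      (K := l * (1 - l) * (a * B) ^ 2 - l)
      hcpos hm1 hm2 (by nlinarith [endm1 hc1]) (by nlinarith [endm2 hc2])
    nlinarith [hq]

theorem stmt_3 (a l m : ℝ) (ha : 0 < a) (hl : l ∈ Set.Icc (0:ℝ) 1)
    (hm : m ∈ Set.Icc (0:ℝ) 1) (hm1 : 1 - (1 - l) * a ^ l ≤ m) (hm2 : m ≤ l * a ^ (l - 1))
    (x y : ℝ) :
    ((1 - m) * x + m * y) ^ 2 / a ^ (2 * l) ≤ (1 - l) * x ^ 2 + l * y ^ 2 / a ^ 2 ∧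
      (((1 - m) * x + m * y) ^ 2 / a ^ (2 * l) = (1 - l) * x ^ 2 + l * y ^ 2 / a ^ 2 ↔
        (l = 0 ∨ l = 1) ∨ (a = 1 ∧ x = y) ∨ (x = 0 ∧ y = 0)) := by
  obtain ⟨hl0, hl1⟩ := hl
  obtain ⟨hm0, hmle⟩ := hm
  rcases eq_or_lt_of_le hl0 with hl0' | hl0'
  · -- l = 0
    have hl' : l = 0 := hl0'.symm
    subst hl'
    have hmz : m = 0 := le_antisymm (by simpa using hm2) hm0
    subst hmz
    norm_num [Real.rpow_zero]
  rcases eq_or_lt_of_le hl1 with hl1' | hl1'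
  · -- l = 1
    subst hl1'
    have hmo : m = 1 := le_antisymm hmle (by simpa using hm1)
    subst hmo
    norm_num [Real.rpow_one, Real.rpow_two]
  -- main case 0 < l < 1
  have hA : 0 < a ^ l := Real.rpow_pos_of_pos ha l
  have hB : 0 < a ^ (l - 1) := Real.rpow_pos_of_pos ha (l - 1)
  have hAB : a * a ^ (l - 1) = a ^ l := by
    rw [Real.rpow_sub ha, Real.rpow_one]
    field_simp
  have h2l : a ^ (2 * l) = (a ^ l) ^ 2 := by
    rw [show (2:ℝ) * l = l * 2 by ring, Real.rpow_mul ha.le, Real.rpow_two]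
  have hamgm : 1 ≤ (1 - l) * a ^ l + l * a ^ (l - 1) := by
    rcases eq_or_ne a 1 with rfl | ha1
    · simp [Real.one_rpow]
    · exact (amgm_strict a l ha ha1 hl0' hl1').le
  have hfle : l * (1 - m) ^ 2 + (1 - l) * a ^ 2 * m ^ 2 ≤ l * (1 - l) * (a ^ l) ^ 2 :=
    f_le ha hl0' hl1' hm0 hmle hm1 hm2 hA hB hAB hamgm
  have hgap : (1 - l) * x ^ 2 + l * y ^ 2 / a ^ 2 - ((1 - m) * x + m * y) ^ 2 / a ^ (2 * l)
      = (a ^ 2 * (a ^ l) ^ 2 * ((1 - l) * x ^ 2) + (a ^ l) ^ 2 * (l * y ^ 2)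
          - a ^ 2 * ((1 - m) * x + m * y) ^ 2) / (a ^ 2 * (a ^ l) ^ 2) := by
    rw [h2l]
    field_simp
  have hl1'' : (0:ℝ) < 1 - l := by linarith
  have hNnonneg : 0 ≤ a ^ 2 * (a ^ l) ^ 2 * ((1 - l) * x ^ 2) + (a ^ l) ^ 2 * (l * y ^ 2)
      - a ^ 2 * ((1 - m) * x + m * y) ^ 2 := by
    nlinarith [sq_nonneg (l * (1 - m) * y - (1 - l) * (m * a) * (a * x)),
      mul_nonneg (sub_nonneg.2 hfle)
        (add_nonneg (mul_nonneg hl1''.le (sq_nonneg (a * x))) (mul_nonneg hl0'.le (sq_nonneg y))),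
      mul_pos hl0' hl1'']
  have hdpos : (0:ℝ) < a ^ 2 * (a ^ l) ^ 2 := by positivity
  constructor
  · nlinarith [div_nonneg hNnonneg hdpos.le, hgap]
  constructor
  · -- forward
    intro heq
    have h0 : (a ^ 2 * (a ^ l) ^ 2 * ((1 - l) * x ^ 2) + (a ^ l) ^ 2 * (l * y ^ 2)
        - a ^ 2 * ((1 - m) * x + m * y) ^ 2) / (a ^ 2 * (a ^ l) ^ 2) = 0 := by
      rw [← hgap]; linarith
    have hN0 := (div_eq_zero_iff.mp h0).resolve_right hdpos.ne'
    by_contra hcon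
    push_neg at hcon
    obtain ⟨hnl, hnay, hnxy⟩ := hcon
    have hNpos : 0 < a ^ 2 * (a ^ l) ^ 2 * ((1 - l) * x ^ 2) + (a ^ l) ^ 2 * (l * y ^ 2)
        - a ^ 2 * ((1 - m) * x + m * y) ^ 2 := by
      rcases eq_or_ne a 1 with rfl | ha1
      · have hxy : x ≠ y := hnay rfl
        have hml : m = l := by
          simp only [Real.one_rpow, mul_one] at hm1 hm2
          linarith
        have hxy2 : 0 < (x - y) ^ 2 := by
          have h := sub_ne_zero.mpr hxy
          positivity
        simp only [Real.one_rpow, one_pow, one_mul, hml]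
        nlinarith [mul_pos (mul_pos hl0' hl1'') hxy2]
      · have hamgm' : 1 < (1 - l) * a ^ l + l * a ^ (l - 1) :=
          amgm_strict a l ha ha1 hl0' hl1'
        have hflt : l * (1 - m) ^ 2 + (1 - l) * a ^ 2 * m ^ 2 < l * (1 - l) * (a ^ l) ^ 2 :=
          f_lt ha hl0' hl1' hm0 hmle hm1 hm2 hA hB hAB hamgm'
        have hS : 0 < (1 - l) * (a * x) ^ 2 + l * y ^ 2 := by
          rcases eq_or_ne x 0 with rfl | hx
          · have hy : y ≠ 0 := hnxy rfl
            have : 0 < y ^ 2 := by positivity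
            nlinarith [sq_nonneg (a * (0:ℝ))]
          · have : 0 < (a * x) ^ 2 := by positivity
            nlinarith [sq_nonneg y]
        nlinarith [sq_nonneg (l * (1 - m) * y - (1 - l) * (m * a) * (a * x)),
          mul_pos (sub_pos.2 hflt) hS, mul_pos hl0' hl1'']
    exact absurd hN0 hNpos.ne'
  · -- backward
    intro h
    rcases h with (h | h) | ⟨ha1, hxy⟩ | ⟨hx, hy⟩
    · exact absurd h hl0'.ne'
    · exact absurd h hl1'.ne
    · subst ha1; subst hxy
      have hN0 : (1:ℝ) ^ 2 * ((1:ℝ) ^ l) ^ 2 * ((1 - l) * x ^ 2) + ((1:ℝ) ^ l) ^ 2 * (l * x ^ 2)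
          - (1:ℝ) ^ 2 * ((1 - m) * x + m * x) ^ 2 = 0 := by
        rw [Real.one_rpow]; ring
      have := hgap
      rw [hN0, zero_div] at this
      linarith
    · subst hx; subst hy
      have hN0 : a ^ 2 * (a ^ l) ^ 2 * ((1 - l) * (0:ℝ) ^ 2) + (a ^ l) ^ 2 * (l * (0:ℝ) ^ 2)
          - a ^ 2 * ((1 - m) * 0 + m * 0) ^ 2 = 0 := by ring
      have := hgap
      rw [hN0, zero_div] at this
      linarith
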